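/- Let {s_i}_{i=1}^r be linearly independent vectors in ℝ^n, each of the form e_p - e_q for distinct p, q ∈ [n], with n ≥ r+1. Define a graph G on vertex set [r] where i and j are adjacent if the supports of s_i and s_j intersect. For distinct p, q ∈ [n], if e_p - e_q lies in the span of {s_i}_{i=1}^r, then there exist vertices i_p and i_q in the same connected component of G such that s_{i_p}[p] ≠ 0 and s_{i_q}[q] ≠ 0. -/
import Mathlib


/-- The selection row `e_p - e_q` in `ℝ^n`. -/
def selRow {n : ℕ} (p q : Fin n) : Fin n → ℝ :=
  fun j => (if j = p then (1 : ℝ) else 0) - (if j = q then (1 : ℝ) else 0)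

/-- The support-overlap graph on the index set of a family of vectors: `i` and `j` are
adjacent iff `i ≠ j` and the supports of `s i` and `s j` intersect. -/
def overlapGraph {r n : ℕ} (s : Fin r → Fin n → ℝ) : SimpleGraph (Fin r) :=
  SimpleGraph.fromRel (fun i j => ∃ k, s i k ≠ 0 ∧ s j k ≠ 0)

lemma overlap_reach {r n : ℕ} (s : Fin r → Fin n → ℝ) {i j : Fin r} {k : Fin n}
    (hi : s i k ≠ 0) (hj : s j k ≠ 0) : (overlapGraph s).Reachable i j := by
  by_cases h : i = j
  · exact h ▸ SimpleGraph.Reachable.refl i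
  · refine SimpleGraph.Adj.reachable ?_
    simp only [overlapGraph, SimpleGraph.fromRel_adj]
    exact ⟨h, Or.inl ⟨k, hi, hj⟩⟩

/-- If `e_p - e_q` lies in the span of linearly independent selection rows
`{s_i}_{i=1}^r` (`n ≥ r+1`), then there are vertices `i_p`, `i_q` in the same connected
component of the support-overlap graph with `s_{i_p}[p] ≠ 0` and `s_{i_q}[q] ≠ 0`. -/
theorem span_implies_linked {r n : ℕ} (hn : r + 1 ≤ n)
    (s : Fin r → Fin n → ℝ) (ps qs : Fin r → Fin n)
    (hpq : ∀ i, ps i ≠ qs i) (hs : ∀ i, s i = selRow (ps i) (qs i))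
    (hli : LinearIndependent ℝ s)
    (p q : Fin n) (hpqd : p ≠ q)
    (hspan : selRow p q ∈ Submodule.span ℝ (Set.range s)) :
    ∃ ip iq : Fin r, (overlapGraph s).Reachable ip iq ∧ s ip p ≠ 0 ∧ s iq q ≠ 0 := by
  classical
  obtain ⟨c, hc⟩ := (Submodule.mem_span_range_iff_exists_fun ℝ).mp hspan
  have hval : ∀ k, ∑ i, c i * s i k = selRow p q k := by
    intro k
    have := congrFun hc k
    simpa [Finset.sum_apply] using this
  have hp1 : ∑ i, c i * s i p = 1 := by
    rw [hval]; simp [selRow, hpqd]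
  have hq1 : ∑ i, c i * s i q = -1 := by
    rw [hval]; simp [selRow, Ne.symm hpqd]
  have hexp : ∃ i, s i p ≠ 0 := by
    by_contra h
    push_neg at h
    rw [Finset.sum_eq_zero (fun i _ => by rw [h i, mul_zero])] at hp1
    exact zero_ne_one hp1
  have hexq : ∃ i, s i q ≠ 0 := by
    by_contra h
    push_neg at h
    rw [Finset.sum_eq_zero (fun i _ => by rw [h i, mul_zero])] at hq1
    norm_num at hq1
  obtain ⟨ip, hip⟩ := hexp
  obtain ⟨iq, hiq⟩ := hexq
  refine ⟨ip, iq, ?_, hip, hiq⟩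
  by_contra hreach
  set C : Finset (Fin r) :=
    Finset.univ.filter (fun i => (overlapGraph s).Reachable ip i) with hC
  have hmemC : ∀ i, i ∈ C ↔ (overlapGraph s).Reachable ip i := by
    intro i; simp [hC]
  have hipC : ip ∈ C := (hmemC ip).mpr (SimpleGraph.Reachable.refl ip)
  have key : ∀ (k : Fin n) (i : Fin r), i ∈ C → s i k ≠ 0 →
      ∀ j, j ∉ C → s j k = 0 := by
    intro k i hiC hik j hjC
    by_contra hjk
    exact hjC ((hmemC j).mpr (((hmemC i).mp hiC).trans (overlap_reach s hik hjk)))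
  set v : Fin n → ℝ := fun k => ∑ i ∈ C, c i * s i k with hv
  have hrow : ∀ i, ∑ k, s i k = 0 := by
    intro i
    rw [hs i]
    simp [selRow, Finset.sum_sub_distrib, Finset.sum_ite_eq']
  have hvtot : ∑ k, v k = 0 := by
    rw [hv]
    rw [Finset.sum_comm]
    refine Finset.sum_eq_zero (fun i _ => ?_)
    rw [← Finset.mul_sum, hrow, mul_zero]
  have hvp : v p = 1 := by
    rw [← hp1, hv]
    exact Finset.sum_subset C.subset_univ
      (fun j _ hjC => by rw [key p ip hipC hip j hjC, mul_zero])
  have hv0 : ∀ k, k ≠ p → v k = 0 := by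
    intro k hk
    by_cases hex : ∃ i ∈ C, s i k ≠ 0
    · obtain ⟨i, hiC, hik⟩ := hex
      have hvk : v k = selRow p q k := by
        rw [← hval k, hv]
        exact Finset.sum_subset C.subset_univ
          (fun j _ hjC => by rw [key k i hiC hik j hjC, mul_zero])
      have hkq : k ≠ q := by
        rintro rfl
        exact hreach (((hmemC i).mp hiC).trans (overlap_reach s hik hiq))
      rw [hvk]; simp [selRow, hk, hkq]
    · push_neg at hex
      exact Finset.sum_eq_zero (fun i hiC => by rw [hex i hiC, mul_zero])
  have : (1 : ℝ) = 0 := by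
    rw [← hvp, ← hvtot]
    exact (Finset.sum_eq_single_of_mem p (Finset.mem_univ p)
      (fun k _ hk => hv0 k hk)).symm
  exact one_ne_zero this
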